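/- Let d ≥ 1 and let ρ be a symmetric probability measure on ℝ^d satisfying condition (*) and with positive definite covariance matrix Σ. Then liminf_{n→∞} (1/n) ln Z_n ≥ 0, where Z_n = ∫_{D_n^+} exp((1/2)⟨(∑_{i=1}^n x_i ᵗx_i)^{-1}(∑_{i=1}^n x_i), ∑_{i=1}^n x_i⟩) ∏_{i=1}^n dρ(x_i). -/

import Mathlib

open MeasureTheory Filter Matrix Real

noncomputable section

/-- `T_n(x) = ∑ i, x_i ᵗx_i`. -/
def Tmat (d n : ℕ) (x : Fin n → Fin d → ℝ) : Matrix (Fin d) (Fin d) ℝ :=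
  ∑ i, Matrix.vecMulVec (x i) (x i)

/-- `S_n(x) = x_1 + … + x_n`. -/
def Svec (d n : ℕ) (x : Fin n → Fin d → ℝ) : Fin d → ℝ := ∑ i, x i

/-- the Hamiltonian `(1/2)⟨T_n⁻¹ S_n, S_n⟩`. -/
def Hfun (d n : ℕ) (x : Fin n → Fin d → ℝ) : ℝ :=
  (1 / 2) * dotProduct ((Tmat d n x)⁻¹.mulVec (Svec d n x)) (Svec d n x)

/-- normalization constant `Z_n`. -/
def Zconst (d : ℕ) (ρ : Measure (Fin d → ℝ)) (n : ℕ) : ℝ :=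
  ∫ x : Fin n → Fin d → ℝ,
    Set.indicator {x | 0 < (Tmat d n x).det} (fun x => Real.exp (Hfun d n x)) x
    ∂ Measure.pi fun _ => ρ

/-- the Curie-Weiss model of SOC `μ̃_{n,ρ}`. -/
def CW (d : ℕ) (ρ : Measure (Fin d → ℝ)) (n : ℕ) : Measure (Fin n → Fin d → ℝ) :=
  (Measure.pi fun _ => ρ).withDensity fun x =>
    Set.indicator {x | 0 < (Tmat d n x).det}
      (fun x => ENNReal.ofReal (Real.exp (Hfun d n x) / Zconst d ρ n)) x

/-- covariance matrix `Σ = ∫ z ᵗz dρ(z)`. -/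
def covM (d : ℕ) (ρ : Measure (Fin d → ℝ)) : Matrix (Fin d) (Fin d) ℝ :=
  Matrix.of fun i j => ∫ z, z i * z j ∂ρ

/-- `M₄(z) = ∑ (∫ yᵢyⱼyₖyₗ dρ) zᵢzⱼzₖzₗ`. -/
def M4 (d : ℕ) (ρ : Measure (Fin d → ℝ)) (z : Fin d → ℝ) : ℝ :=
  ∑ i : Fin d, ∑ j : Fin d, ∑ k : Fin d, ∑ l : Fin d,
    (∫ y, y i * y j * y k * y l ∂ρ) * (z i * z j * z k * z l)

/-- symmetric measure: invariant under `z ↦ -z`. -/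
def SymMeas (d : ℕ) (ρ : Measure (Fin d → ℝ)) : Prop := ρ.map (fun z => -z) = ρ

/-- condition `(*)` : some Gaussian exponential moment. -/
def CondStar (d : ℕ) (ρ : Measure (Fin d → ℝ)) : Prop :=
  ∃ v₀ > (0:ℝ), Integrable (fun z => Real.exp (v₀ * dotProduct z z)) ρ

/-- the ρ-measure of every vector hyperplane is `< 1/√e`. -/
def HypLt (d : ℕ) (ρ : Measure (Fin d → ℝ)) : Prop :=
  ∀ s : Fin d → ℝ, s ≠ 0 →
    ρ {z | dotProduct s z = 0} < ENNReal.ofReal (1 / Real.sqrt (Real.exp 1))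

/-- non-degeneracy: the ρ-measure of every affine hyperplane is `< 1`. -/
def NonDeg (d : ℕ) (ρ : Measure (Fin d → ℝ)) : Prop :=
  ∀ s : Fin d → ℝ, s ≠ 0 → ∀ c : ℝ, ρ {z | dotProduct s z = c} < 1

-- positive square root of a positive semi-definite matrix (junk value otherwise).
open scoped Classical in
def psqrt (d : ℕ) (M : Matrix (Fin d) (Fin d) ℝ) : Matrix (Fin d) (Fin d) ℝ :=
  if h : M.PosSemidef then h.1.eigenvectorUnitary *
    diagonal ((RCLike.ofReal : ℝ → ℝ) ∘ Real.sqrt ∘ h.1.eigenvalues) *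
    (star h.1.eigenvectorUnitary : Matrix (Fin d) (Fin d) ℝ) else 0

/-- Euclidean norm on `ℝ^d`. -/
def vnorm (d : ℕ) (v : Fin d → ℝ) : ℝ := Real.sqrt (dotProduct v v)

/-- Frobenius norm on `d × d` matrices. -/
def mnorm (d : ℕ) (M : Matrix (Fin d) (Fin d) ℝ) : ℝ :=
  Real.sqrt (∑ i : Fin d, ∑ j : Fin d, (M i j) ^ 2)

/-- the log-Laplace transform `Λ` of `(Z, Z ᵗZ)`, with values in `(-∞, +∞]`. -/
def Lam (d : ℕ) (ρ : Measure (Fin d → ℝ)) (u : Fin d → ℝ)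
    (A : Matrix (Fin d) (Fin d) ℝ) : EReal :=
  ENNReal.log (∫⁻ z, ENNReal.ofReal
    (Real.exp (dotProduct u z + dotProduct (A.mulVec z) z)) ∂ρ)

/-- the Cramér transform `I` of `(Z, Z ᵗZ)`. -/
def CramerI (d : ℕ) (ρ : Measure (Fin d → ℝ)) (x : Fin d → ℝ)
    (M : Matrix (Fin d) (Fin d) ℝ) : EReal :=
  ⨆ p : (Fin d → ℝ) × {A : Matrix (Fin d) (Fin d) ℝ // A.IsSymm},
    ((dotProduct x p.1 + (M * (p.2 : Matrix (Fin d) (Fin d) ℝ)).trace : ℝ) : EReal)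
      - Lam d ρ p.1 p.2

end


section Aux

open Equiv

lemma Tmat_eq (d n : ℕ) (x : Fin n → Fin d → ℝ) :
    Tmat d n x = (Matrix.of x)ᵀ * Matrix.of x := by
  ext k l
  simp [Tmat, Matrix.mul_apply, Matrix.vecMulVec_apply, Matrix.sum_apply]

lemma Tmat_psd (d n : ℕ) (x : Fin n → Fin d → ℝ) : (Tmat d n x).PosSemidef := by
  rw [Tmat_eq]
  have h := Matrix.posSemidef_conjTranspose_mul_self (Matrix.of x)
  have he : (Matrix.of x)ᴴ = (Matrix.of x)ᵀ := by ext i j; simp [Matrix.conjTranspose_apply]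
  rwa [he] at h

lemma Tmat_posDef {d n : ℕ} {x : Fin n → Fin d → ℝ} (h : 0 < (Tmat d n x).det) :
    (Tmat d n x).PosDef := by
  refine .of_dotProduct_mulVec_pos (Tmat_psd d n x).isHermitian fun v hv => ?_
  rcases lt_or_eq_of_le ((Tmat_psd d n x).dotProduct_mulVec_nonneg v) with hlt | heq
  · simpa using hlt
  · exfalso
    have h0 : (Tmat d n x).mulVec v = 0 :=
      ((Tmat_psd d n x).dotProduct_mulVec_zero_iff v).mp (by simpa using heq.symm)
    exact hv (Matrix.eq_zero_of_mulVec_eq_zero h.ne' h0)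

lemma vecMulVec_psd (d : ℕ) (v : Fin d → ℝ) : (Matrix.vecMulVec v v).PosSemidef := by
  have h : Matrix.vecMulVec v v = Tmat d 1 (fun _ => v) := by simp [Tmat]
  rw [h]; exact Tmat_psd d 1 _

lemma Tmat_det_sq (d : ℕ) (x : Fin d → Fin d → ℝ) :
    (Tmat d d x).det = (Matrix.of x).det ^ 2 := by
  rw [Tmat_eq, Matrix.det_mul, Matrix.det_transpose, sq]

lemma det_expand (d : ℕ) (x : Fin d → Fin d → ℝ) :
    (Tmat d d x).det = ∑ σ : Equiv.Perm (Fin d), ∑ τ : Equiv.Perm (Fin d),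
      ((Equiv.Perm.sign σ : ℤ) * (Equiv.Perm.sign τ : ℤ) : ℝ) *
        ∏ i, (x i (σ i) * x i (τ i)) := by
  have hA : (Matrix.of x).det = ∑ σ : Equiv.Perm (Fin d),
      ((Equiv.Perm.sign σ : ℤ) : ℝ) * ∏ i, x i (σ i) := by
    rw [← Matrix.det_transpose, Matrix.det_apply']
    simp [Matrix.transpose_apply]
  rw [Tmat_det_sq, sq, hA, Finset.sum_mul_sum]
  refine Finset.sum_congr rfl fun σ _ => Finset.sum_congr rfl fun τ _ => ?_
  rw [Finset.prod_mul_distrib]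
  ring

lemma measurableSet_S (d n : ℕ) :
    MeasurableSet {x : Fin n → Fin d → ℝ | 0 < (Tmat d n x).det} := by
  have hc : Continuous fun x : Fin n → Fin d → ℝ => (Tmat d n x).det := by
    apply Continuous.matrix_det
    apply continuous_matrix
    intro k l
    have he : (fun x : Fin n → Fin d → ℝ => Tmat d n x k l)
        = fun x => ∑ i, x i k * x i l := by
      funext x; simp [Tmat, Matrix.sum_apply, Matrix.vecMulVec_apply]
    rw [he]
    exact continuous_finset_sum _ fun i _ => by fun_prop
  exact measurableSet_lt measurable_const hc.measurable

lemma abs_mul_le_dp {d : ℕ} (z : Fin d → ℝ) (i j : Fin d) :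
    |z i * z j| ≤ dotProduct z z := by
  have h1 : 2 * |z i| * |z j| ≤ |z i|^2 + |z j|^2 := two_mul_le_add_sq _ _
  have hi : z i ^ 2 ≤ dotProduct z z := by
    have := Finset.single_le_sum (f := fun k => z k * z k)
      (fun k _ => mul_self_nonneg (z k)) (Finset.mem_univ i)
    simpa [sq, dotProduct] using this
  have hj : z j ^ 2 ≤ dotProduct z z := by
    have := Finset.single_le_sum (f := fun k => z k * z k)
      (fun k _ => mul_self_nonneg (z k)) (Finset.mem_univ j)
    simpa [sq, dotProduct] using this
  rw [abs_mul]
  nlinarith [sq_abs (z i), sq_abs (z j)]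

lemma integrable_mul {d : ℕ} {ρ : Measure (Fin d → ℝ)} [IsProbabilityMeasure ρ]
    (hstar : CondStar d ρ) (i j : Fin d) :
    Integrable (fun z : Fin d → ℝ => z i * z j) ρ := by
  obtain ⟨v₀, hv₀, hint⟩ := hstar
  refine (hint.const_mul (1 / v₀)).mono
    (((measurable_pi_apply i).mul (measurable_pi_apply j)).aestronglyMeasurable)
    (ae_of_all _ fun z => ?_)
  have h1 : |z i * z j| ≤ dotProduct z z := abs_mul_le_dp z i j
  have h2 : dotProduct z z ≤ (1 / v₀) * Real.exp (v₀ * dotProduct z z) := by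
    have key := Real.add_one_le_exp (v₀ * dotProduct z z)
    have hpos : (0:ℝ) < 1 / v₀ := by positivity
    have h4 := mul_le_mul_of_nonneg_left key hpos.le
    have h5 : (1/v₀) * (v₀ * dotProduct z z + 1)
        = dotProduct z z + 1/v₀ := by field_simp
    linarith [h5 ▸ h4]
  have h3 : 0 < (1 / v₀) * Real.exp (v₀ * dotProduct z z) :=
    mul_pos (by positivity) (Real.exp_pos _)
  simp only [Real.norm_eq_abs]
  rw [abs_of_pos h3]
  exact h1.trans h2

lemma integral_det (d : ℕ) (ρ : Measure (Fin d → ℝ)) [IsProbabilityMeasure ρ]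
    (hstar : CondStar d ρ) :
    ∫ x : Fin d → Fin d → ℝ, (Tmat d d x).det ∂(Measure.pi fun _ => ρ)
      = (d.factorial : ℝ) * (covM d ρ).det := by
  letI : MeasureSpace (Fin d → ℝ) := ⟨ρ⟩
  haveI : IsProbabilityMeasure (volume : Measure (Fin d → ℝ)) := ‹IsProbabilityMeasure ρ›
  have hvol : (Measure.pi fun _ : Fin d => ρ) = (volume : Measure (Fin d → Fin d → ℝ)) :=
    volume_pi.symm
  rw [hvol]
  simp only [det_expand]
  have hterm : ∀ σ τ : Equiv.Perm (Fin d),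
      Integrable (fun x : Fin d → Fin d → ℝ =>
        ((Equiv.Perm.sign σ : ℤ) * (Equiv.Perm.sign τ : ℤ) : ℝ) *
          ∏ i, (x i (σ i) * x i (τ i))) volume := by
    intro σ τ
    exact (Integrable.fintype_prod_dep (f := fun i (z : Fin d → ℝ) => z (σ i) * z (τ i))
      (fun i => integrable_mul hstar (σ i) (τ i))).const_mul _
  rw [integral_finset_sum _ (fun σ _ => integrable_finset_sum _ (fun τ _ => hterm σ τ))]
  have hsum : ∀ σ, ∫ x : Fin d → Fin d → ℝ, (∑ τ : Equiv.Perm (Fin d),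
      ((Equiv.Perm.sign σ : ℤ) * (Equiv.Perm.sign τ : ℤ) : ℝ) *
        ∏ i, (x i (σ i) * x i (τ i))) = ∑ τ : Equiv.Perm (Fin d),
      ((Equiv.Perm.sign σ : ℤ) * (Equiv.Perm.sign τ : ℤ) : ℝ) *
        ∏ i, covM d ρ (σ i) (τ i) := by
    intro σ
    rw [integral_finset_sum _ (fun τ _ => hterm σ τ)]
    refine Finset.sum_congr rfl fun τ _ => ?_
    rw [MeasureTheory.integral_const_mul]
    congr 1
    have h := integral_fintype_prod_eq_prod (𝕜 := ℝ) (μ := fun _ => (volume : Measure (Fin d → ℝ)))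
      (f := fun i (z : Fin d → ℝ) => z (σ i) * z (τ i))
    exact h
  simp only [hsum]
  have halg : ∀ σ : Equiv.Perm (Fin d), ∑ τ : Equiv.Perm (Fin d),
      ((Equiv.Perm.sign σ : ℤ) * (Equiv.Perm.sign τ : ℤ) : ℝ) *
        ∏ i, covM d ρ (σ i) (τ i) = (covM d ρ).det := by
    intro σ
    rw [← Equiv.sum_comp (Equiv.mulRight σ)]
    have hre : ∀ g : Equiv.Perm (Fin d),
        ((Equiv.Perm.sign σ : ℤ) * (Equiv.Perm.sign ((Equiv.mulRight σ) g) : ℤ) : ℝ) *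
          ∏ i, covM d ρ (σ i) (((Equiv.mulRight σ) g) i)
        = ((Equiv.Perm.sign g : ℤ) : ℝ) * ∏ k, covM d ρ k (g k) := by
      intro g
      have h1 : ((Equiv.mulRight σ) g) = g * σ := rfl
      rw [h1]
      have hsgn : ((Equiv.Perm.sign σ : ℤ) * (Equiv.Perm.sign (g * σ) : ℤ) : ℝ)
          = ((Equiv.Perm.sign g : ℤ) : ℝ) := by
        rw [Equiv.Perm.sign_mul]
        rcases Int.units_eq_one_or (Equiv.Perm.sign σ) with h | h <;>
          rcases Int.units_eq_one_or (Equiv.Perm.sign g) with h2 | h2 <;>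
          simp [h, h2]
      rw [← hsgn]
      congr 1
      have h2 : ∀ i, covM d ρ (σ i) ((g * σ) i) = (fun k => covM d ρ k (g k)) (σ i) := by
        intro i; rfl
      simp only [h2]
      exact Equiv.prod_comp σ (fun k => covM d ρ k (g k))
    simp only [hre]
    rw [← Matrix.det_transpose, Matrix.det_apply']
    simp [Matrix.transpose_apply]
  rw [Finset.sum_congr rfl fun σ _ => halg σ]
  rw [Finset.sum_const, Finset.card_univ, Fintype.card_perm, Fintype.card_fin, nsmul_eq_mul]

lemma mono_step (d : ℕ) (ρ : Measure (Fin d → ℝ)) [IsProbabilityMeasure ρ] (n : ℕ) :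
    (Measure.pi fun _ : Fin n => ρ) {x | 0 < (Tmat d n x).det}
      ≤ (Measure.pi fun _ : Fin (n+1) => ρ) {x | 0 < (Tmat d (n+1) x).det} := by
  set S : Set (Fin n → Fin d → ℝ) := {x | 0 < (Tmat d n x).det}
  have hmp := measurePreserving_piFinSuccAbove (fun _ : Fin (n+1) => ρ) (Fin.last n)
  set e := MeasurableEquiv.piFinSuccAbove (fun _ : Fin (n+1) => (Fin d → ℝ)) (Fin.last n)
  have hBmeas : MeasurableSet ((Set.univ : Set (Fin d → ℝ)) ×ˢ S) :=
    MeasurableSet.univ.prod (measurableSet_S d n)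
  have h1 : (Measure.pi fun _ : Fin (n+1) => ρ) (e ⁻¹' (Set.univ ×ˢ S))
      = (ρ.prod (Measure.pi fun _ : Fin n => ρ)) (Set.univ ×ˢ S) :=
    hmp.measure_preimage hBmeas.nullMeasurableSet
  have h2 : (ρ.prod (Measure.pi fun _ : Fin n => ρ)) (Set.univ ×ˢ S)
      = (Measure.pi fun _ : Fin n => ρ) S := by
    rw [Measure.prod_prod, measure_univ, one_mul]
  have hsub : e ⁻¹' (Set.univ ×ˢ S) ⊆ {x | 0 < (Tmat d (n+1) x).det} := by
    intro x hx
    simp only [Set.mem_preimage, Set.mem_prod, Set.mem_univ, true_and] at hx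
    have hx' : 0 < (Tmat d n (fun j => x ((Fin.last n).succAbove j))).det := hx
    have hcast : (fun j : Fin n => x ((Fin.last n).succAbove j))
        = fun j => x (Fin.castSucc j) := by
      funext j; rw [Fin.succAbove_last]
    rw [hcast] at hx'
    have hsum : Tmat d (n+1) x
        = Tmat d n (fun j => x (Fin.castSucc j))
          + Matrix.vecMulVec (x (Fin.last n)) (x (Fin.last n)) := by
      simp only [Tmat]
      rw [Fin.sum_univ_castSucc]
    have hpd : (Tmat d (n+1) x).PosDef := by
      rw [hsum]
      exact (Tmat_posDef hx').add_posSemidef (vecMulVec_psd d _)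
    exact hpd.det_pos
  calc (Measure.pi fun _ : Fin n => ρ) S
      = (Measure.pi fun _ : Fin (n+1) => ρ) (e ⁻¹' (Set.univ ×ˢ S)) := (h1.trans h2).symm
    _ ≤ _ := measure_mono hsub

lemma Hfun_nonneg {d n : ℕ} {x : Fin n → Fin d → ℝ} (h : 0 < (Tmat d n x).det) :
    0 ≤ Hfun d n x := by
  have hpd : (Tmat d n x)⁻¹.PosDef := (Tmat_posDef h).inv
  have h2 := hpd.posSemidef.dotProduct_mulVec_nonneg (Svec d n x)
  simp only [star_trivial] at h2
  rw [dotProduct_comm] at h2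
  exact mul_nonneg (by norm_num) h2

lemma pos_measure_S (d : ℕ) (ρ : Measure (Fin d → ℝ)) [IsProbabilityMeasure ρ]
    (hstar : CondStar d ρ) (hcov : (covM d ρ).PosDef) :
    0 < (Measure.pi fun _ : Fin d => ρ) {x | 0 < (Tmat d d x).det} := by
  by_contra hcon
  push_neg at hcon
  have h0 : (Measure.pi fun _ : Fin d => ρ) {x | 0 < (Tmat d d x).det} = 0 :=
    le_antisymm hcon (by simp)
  have hae : ∀ᵐ x ∂(Measure.pi fun _ : Fin d => ρ), (Tmat d d x).det ≤ 0 := by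
    rw [ae_iff]
    convert h0 using 2
    ext x; simp [not_le]
  have hae' : ∀ᵐ x ∂(Measure.pi fun _ : Fin d => ρ), (Tmat d d x).det = 0 := by
    filter_upwards [hae] with x hx
    have h3 : 0 ≤ (Tmat d d x).det := by rw [Tmat_det_sq]; positivity
    linarith
  have hint : ∫ x : Fin d → Fin d → ℝ, (Tmat d d x).det ∂(Measure.pi fun _ => ρ) = 0 := by
    rw [integral_congr_ae hae', integral_zero]
  rw [integral_det d ρ hstar] at hint
  have hgt : (0:ℝ) < (d.factorial : ℝ) * (covM d ρ).det :=
    mul_pos (by exact_mod_cast Nat.factorial_pos d) hcov.det_pos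
  linarith

lemma Zconst_bound (d : ℕ) (ρ : Measure (Fin d → ℝ)) [IsProbabilityMeasure ρ] (n : ℕ) :
    Zconst d ρ n = 0 ∨
      ((Measure.pi fun _ : Fin n => ρ) {x | 0 < (Tmat d n x).det}).toReal ≤ Zconst d ρ n := by
  set μ := Measure.pi fun _ : Fin n => ρ
  set S : Set (Fin n → Fin d → ℝ) := {x | 0 < (Tmat d n x).det}
  by_cases hint : Integrable (fun x => Set.indicator S (fun x => Real.exp (Hfun d n x)) x) μ
  · right
    have hS := measurableSet_S d n
    have hone : Integrable (fun x => Set.indicator S (fun _ => (1:ℝ)) x) μ :=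
      (integrable_const 1).indicator hS
    have hle : ∀ x, Set.indicator S (fun _ => (1:ℝ)) x
        ≤ Set.indicator S (fun x => Real.exp (Hfun d n x)) x := by
      intro x
      by_cases hx : x ∈ S
      · rw [Set.indicator_of_mem hx, Set.indicator_of_mem hx]
        exact Real.one_le_exp (Hfun_nonneg hx)
      · rw [Set.indicator_of_notMem hx, Set.indicator_of_notMem hx]
    have hmon := integral_mono hone hint hle
    have heq : ∫ x, Set.indicator S (fun _ => (1:ℝ)) x ∂μ = (μ S).toReal := by
      exact integral_indicator_one hS
    rw [heq] at hmon
    exact hmon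
  · left
    exact integral_undef hint

end Aux

/-- `liminf (1/n) ln Z_n ≥ 0`. -/
theorem liminf_log_Zconst_nonneg
    (d : ℕ) (hd : 1 ≤ d) (ρ : Measure (Fin d → ℝ)) [IsProbabilityMeasure ρ]
    (hsym : SymMeas d ρ) (hstar : CondStar d ρ) (hcov : (covM d ρ).PosDef) :
    ∀ c < (0:ℝ), ∀ᶠ n : ℕ in atTop, c ≤ Real.log (Zconst d ρ n) / n := by
  intro c hc
  set p : ℝ := ((Measure.pi fun _ : Fin d => ρ) {x | 0 < (Tmat d d x).det}).toReal with hp_def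
  have hp : 0 < p :=
    ENNReal.toReal_pos (pos_measure_S d ρ hstar hcov).ne' (measure_ne_top _ _)
  have hmono : ∀ n, d ≤ n →
      p ≤ ((Measure.pi fun _ : Fin n => ρ) {x | 0 < (Tmat d n x).det}).toReal := by
    intro n hn
    induction n, hn using Nat.le_induction with
    | base => exact le_refl _
    | succ m hm ih =>
        exact ih.trans ((ENNReal.toReal_le_toReal (measure_ne_top _ _)
          (measure_ne_top _ _)).mpr (mono_step d ρ m))
  obtain ⟨M, hM⟩ := exists_nat_ge (Real.log p / c)
  filter_upwards [eventually_ge_atTop (max d (max M 1))] with n hn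
  have hdn : d ≤ n := le_trans (le_max_left _ _) hn
  have hMn : M ≤ n := le_trans (le_trans (le_max_left _ _) (le_max_right _ _)) hn
  have h1n : 1 ≤ n := le_trans (le_trans (le_max_right _ _) (le_max_right _ _)) hn
  have hnpos : (0:ℝ) < n := by exact_mod_cast h1n
  have hcn : c * n ≤ Real.log p := by
    have h1 : Real.log p / c ≤ (n:ℝ) := hM.trans (by exact_mod_cast hMn)
    have h2 := (div_le_iff_of_neg hc).mp h1
    linarith
  rcases Zconst_bound d ρ n with hZ | hZ
  · rw [hZ, Real.log_zero, zero_div]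
    linarith
  · have hpZ : p ≤ Zconst d ρ n := (hmono n hdn).trans hZ
    have hlog : Real.log p ≤ Real.log (Zconst d ρ n) := Real.log_le_log hp hpZ
    rw [le_div_iff₀ hnpos]
    linarith
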